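/- Let C be a triangulated category and T a contravariantly finite rigid full subcategory. A morphism f : X → Y has the right lifting property with respect to all morphisms 0 → ΣT' (T' in T) if and only if the cone of f factors through an object of Σ(T^⊥). -/

import Mathlib

open CategoryTheory CategoryTheory.Limits CategoryTheory.Pretriangulated

variable {C : Type*} [Category C] [Preadditive C] [HasZeroObject C]
  [HasShift C ℤ] [∀ n : ℤ, Functor.Additive (CategoryTheory.shiftFunctor C n)]
  [Pretriangulated C]

/-- `f` factors through an object of the set `S`. -/
def FactorsThruSet (S : Set C) {X Y : C} (f : X ⟶ Y) : Prop :=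
  ∃ U ∈ S, ∃ (a : X ⟶ U) (b : U ⟶ Y), f = a ≫ b

/-- The right perpendicular subcategory `T^⊥` of a full subcategory `T`. -/
def rperp (T : Set C) : Set C := {Z | ∀ T' ∈ T, ∀ (f : T' ⟶ Z), f = 0}

/-- The class `W` of morphisms whose connecting morphisms in any triangle factor
through `T^⊥`. -/
def Wclass (T : Set C) {X Y : C} (f : X ⟶ Y) : Prop :=
  ∀ (Z : C) (r : Z ⟶ X) (s : Y ⟶ Z⟦(1:ℤ)⟧),
    (Triangle.mk r f s ∈ distTriang C) →
      FactorsThruSet (rperp T) r ∧ FactorsThruSet (rperp T) s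

/-- A subcategory `T` is rigid if `C(T, ΣT) = 0`. -/
def IsRigid (T : Set C) : Prop :=
  ∀ T' ∈ T, ∀ T'' ∈ T, ∀ (f : T' ⟶ (T'' : C)⟦(1:ℤ)⟧), f = 0

/-- A subcategory is contravariantly finite if every object admits a right approximation. -/
def ContravariantlyFinite (T : Set C) : Prop :=
  ∀ X : C, ∃ T₀ ∈ T, ∃ (p : T₀ ⟶ X), ∀ T' ∈ T, ∀ (u : T' ⟶ X), ∃ v : T' ⟶ T₀, v ≫ p = u
open ZeroObject

/-- `f` factors through the shift of an object of the set `S`. -/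
def FactorsThruShiftSet (S : Set C) {X Y : C} (f : X ⟶ Y) : Prop :=
  ∃ U ∈ S, ∃ (a : X ⟶ (U⟦(1:ℤ)⟧)) (b : (U⟦(1:ℤ)⟧) ⟶ Y), f = a ≫ b

/-- A morphism `f` has the right lifting property with respect to all `0 ⟶ ΣT'`
(`T' ∈ T`) if and only if its cone factors through `Σ(T^⊥)`. -/
theorem rlp_J_iff_cone_factors (T : Set C)
    (hcf : ContravariantlyFinite T) (hrig : IsRigid T)
    {X Y Cf : C} (f : X ⟶ Y) (g : Y ⟶ Cf) (h : Cf ⟶ X⟦(1:ℤ)⟧)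
    (htri : Triangle.mk f g h ∈ distTriang C) :
    (∀ T' ∈ T, HasLiftingProperty (0 : (0 : C) ⟶ (T' : C)⟦(1:ℤ)⟧) f) ↔
      FactorsThruShiftSet (rperp T) g := by
  constructor
  · intro hrlp
    obtain ⟨T₀, hT₀, t, happ⟩ := hcf (Y⟦(-1:ℤ)⟧)
    obtain ⟨U, q, s, hTr⟩ := distinguished_cocone_triangle t
    have htq : t ≫ q = 0 := comp_distTriang_mor_zero₁₂ _ hTr
    have hU : U ∈ rperp T := by
      intro T'' hT'' u
      have hus : u ≫ (Triangle.mk t q s).mor₃ = 0 := hrig T'' hT'' T₀ hT₀ _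
      obtain ⟨w, hw⟩ := Triangle.coyoneda_exact₃ _ hTr u hus
      obtain ⟨v, hv⟩ := happ T'' hT'' w
      rw [hw]
      show w ≫ q = 0
      rw [← hv]
      show (v ≫ t) ≫ q = 0
      rw [Category.assoc, htq, comp_zero]
    set e : ((Y⟦(-1:ℤ)⟧)⟦(1:ℤ)⟧ : C) ≅ Y :=
      (shiftFunctorCompIsoId C (-1) 1 (by omega)).app Y with he
    have hlift : t⟦(1:ℤ)⟧' ≫ e.hom ≫ g = 0 := by
      haveI := hrlp T₀ hT₀
      have sq : CommSq (0 : (0:C) ⟶ X) (0 : (0:C) ⟶ (T₀ : C)⟦(1:ℤ)⟧) f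
          (t⟦(1:ℤ)⟧' ≫ e.hom) := ⟨(isZero_zero C).eq_of_src _ _⟩
      obtain ⟨l⟩ := (HasLiftingProperty.sq_hasLift sq).exists_lift
      rw [← Category.assoc, ← l.fac_right, Category.assoc]
      have : f ≫ g = 0 := comp_distTriang_mor_zero₁₂ _ htri
      rw [this, comp_zero]
    have hTr' := Triangle.shift_distinguished _ hTr 1
    obtain ⟨b, hb⟩ : ∃ b : (U⟦(1:ℤ)⟧ ⟶ Cf), e.hom ≫ g = ((-1 : ℤˣ) • q⟦(1:ℤ)⟧') ≫ b := Triangle.yoneda_exact₂ _ hTr' (e.hom ≫ g) (by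
      show ((1:ℤ).negOnePow • t⟦(1:ℤ)⟧') ≫ e.hom ≫ g = 0
      rw [Linear.units_smul_comp, ← Category.assoc]
      rw [Category.assoc, hlift, smul_zero])
    refine ⟨U, hU, e.inv ≫ ((-1 : ℤˣ) • q⟦(1:ℤ)⟧'), b, ?_⟩
    rw [Category.assoc, ← hb, ← Category.assoc, e.inv_hom_id, Category.id_comp]
  · rintro ⟨U, hU, a, b, hab⟩ T' hT'
    constructor
    intro top bot sq
    have hba : bot ≫ a = 0 := by
      obtain ⟨c, hc⟩ := (shiftFunctor C (1:ℤ)).map_surjective (bot ≫ a)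
      rw [← hc, hU T' hT' c, Functor.map_zero]
    have hbg : bot ≫ (Triangle.mk f g h).mor₂ = 0 := by
      show bot ≫ g = 0
      rw [hab, ← Category.assoc, hba, zero_comp]
    obtain ⟨l, hl⟩ := Triangle.coyoneda_exact₂ _ htri bot hbg
    exact ⟨⟨⟨l, (isZero_zero C).eq_of_src _ _, hl.symm⟩⟩⟩
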